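/- arXiv:math/0404153 — 2 statements merged into one kernel-verified Lean document; each statement's English description precedes it below -/
import Mathlib

section
/- Let (X, 𝒲_n) be a numerical radius operator space, let n ≥ 1, and let f be a linear functional on M_n(X) with 𝒲*(f) ≤ 1. Then there exists a state p₀ on M_n(ℂ) such that for all r ∈ ℕ, all complex n×r matrices α, all x ∈ M_r(X), and all complex r×n matrices β: (1) |f(α x α*)| ≤ p₀(α α*) · 𝒲_r(x), and (2) |f(α x β)| ≤ 2 p₀(α α*)^{1/2} p₀(β* β)^{1/2} · 𝒲_{2r}([[0, x],[0, 0]]), where [[0,x],[0,0]] ∈ M_{2r}(X) is the block matrix with x in the upper-right r×r corner and zeros elsewhere. -/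
open scoped ComplexOrder Matrix ENNReal TensorProduct

universe u v

noncomputable section

/-- The block-diagonal sum `x ⊕ y` of two square matrices. -/
def blockDiag {X : Type*} [Zero X] {m n : ℕ} (x : Matrix (Fin m) (Fin m) X)
    (y : Matrix (Fin n) (Fin n) X) : Matrix (Fin (m + n)) (Fin (m + n)) X :=
  Matrix.submatrix (Matrix.fromBlocks x 0 0 y) finSumFinEquiv.symm finSumFinEquiv.symm

/-- The block matrix `[[0, x], [0, 0]]` with `x` in the upper-right corner. -/
def cornerBlock {X : Type*} [Zero X] {n : ℕ} (x : Matrix (Fin n) (Fin n) X) :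
    Matrix (Fin (n + n)) (Fin (n + n)) X :=
  Matrix.submatrix (Matrix.fromBlocks 0 x 0 0) finSumFinEquiv.symm finSumFinEquiv.symm

/-- Multiplication `α x` of a scalar matrix with a matrix over a ℂ-module. -/
def scalarMulLeft {X : Type*} [AddCommMonoid X] [Module ℂ X] {m n k : ℕ}
    (α : Matrix (Fin m) (Fin n) ℂ) (x : Matrix (Fin n) (Fin k) X) :
    Matrix (Fin m) (Fin k) X :=
  Matrix.of fun i j => ∑ l, α i l • x l j

/-- Multiplication `x β` of a matrix over a ℂ-module with a scalar matrix. -/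
def scalarMulRight {X : Type*} [AddCommMonoid X] [Module ℂ X] {m n k : ℕ}
    (x : Matrix (Fin m) (Fin n) X) (β : Matrix (Fin n) (Fin k) ℂ) :
    Matrix (Fin m) (Fin k) X :=
  Matrix.of fun i j => ∑ l, β l j • x i l

/-- Operator norm of a rectangular complex matrix, as an operator ℓ²(Fin n) → ℓ²(Fin m). -/
def matOpNorm {m n : ℕ} (α : Matrix (Fin m) (Fin n) ℂ) : ℝ :=
  ‖LinearMap.toContinuousLinearMap (Matrix.toEuclideanLin α)‖

/-- The numerical radius of a bounded operator on a complex inner product space. -/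
def numRadius {H : Type*} [NormedAddCommGroup H] [InnerProductSpace ℂ H]
    (a : H →L[ℂ] H) : ℝ :=
  ⨆ ξ : {ξ : H // ‖ξ‖ ≤ 1}, ‖(inner ℂ (ξ : H) (a ξ) : ℂ)‖

/-- The bounded operator `Hⁿ → Hᵐ` induced by an `m × n` matrix of bounded operators,
where `Hⁿ` carries the ℓ²-direct sum structure. -/
def matOpRect {H : Type*} [NormedAddCommGroup H] [InnerProductSpace ℂ H] {m n : ℕ}
    (a : Matrix (Fin m) (Fin n) (H →L[ℂ] H)) :
    (PiLp 2 fun _ : Fin n => H) →L[ℂ] (PiLp 2 fun _ : Fin m => H) :=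
  ((PiLp.continuousLinearEquiv 2 ℂ (fun _ : Fin m => H)).symm.toContinuousLinearMap) ∘L
    (ContinuousLinearMap.pi fun i => ∑ j, (a i j).comp (ContinuousLinearMap.proj j)) ∘L
    ((PiLp.continuousLinearEquiv 2 ℂ (fun _ : Fin n => H)).toContinuousLinearMap)

/-- The bounded operator on `Hⁿ` induced by an `n × n` matrix of bounded operators. -/
def matOp {H : Type*} [NormedAddCommGroup H] [InnerProductSpace ℂ H] {n : ℕ}
    (a : Matrix (Fin n) (Fin n) (H →L[ℂ] H)) :
    (PiLp 2 fun _ : Fin n => H) →L[ℂ] (PiLp 2 fun _ : Fin n => H) :=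
  matOpRect a

/-- The numerical radius of a complex `n × n` matrix, acting on `ℂⁿ`. -/
def matNumRadius {n : ℕ} (a : Matrix (Fin n) (Fin n) ℂ) : ℝ :=
  numRadius (LinearMap.toContinuousLinearMap (Matrix.toEuclideanLin a))

/-- The identification of `M_k(M_n(ℂ))` with `M_{kn}(ℂ)`. -/
def flatten {k n : ℕ} (x : Matrix (Fin k) (Fin k) (Matrix (Fin n) (Fin n) ℂ)) :
    Matrix (Fin (k * n)) (Fin (k * n)) ℂ :=
  Matrix.of fun i j =>
    x (finProdFinEquiv.symm i).1 (finProdFinEquiv.symm j).1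
      (finProdFinEquiv.symm i).2 (finProdFinEquiv.symm j).2

/-- An (abstract) numerical radius operator space: a complex vector space `X` together with a
norm `W n` on each matrix space `M_n(X)` satisfying the conditions (WI) and (WII). -/
structure NRNorm (X : Type u) [AddCommGroup X] [Module ℂ X] where
  W : ∀ n : ℕ, Matrix (Fin n) (Fin n) X → ℝ
  nonneg : ∀ (n : ℕ) (x : Matrix (Fin n) (Fin n) X), 0 ≤ W n x
  eq_zero_iff : ∀ (n : ℕ) (x : Matrix (Fin n) (Fin n) X), W n x = 0 ↔ x = 0
  add_le : ∀ (n : ℕ) (x y : Matrix (Fin n) (Fin n) X), W n (x + y) ≤ W n x + W n y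
  smul_eq : ∀ (n : ℕ) (c : ℂ) (x : Matrix (Fin n) (Fin n) X), W n (c • x) = ‖c‖ * W n x
  cond_WI : ∀ (m n : ℕ) (x : Matrix (Fin m) (Fin m) X) (y : Matrix (Fin n) (Fin n) X),
    W (m + n) (blockDiag x y) = max (W m x) (W n y)
  cond_WII : ∀ (m n : ℕ) (α : Matrix (Fin n) (Fin m) ℂ) (x : Matrix (Fin m) (Fin m) X),
    W n (scalarMulRight (scalarMulLeft α x) αᴴ) ≤ matOpNorm α ^ 2 * W m x

/-- An (abstract) operator space: a complex vector space `X` together with a norm `O n` on each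
matrix space `M_n(X)` satisfying Ruan's axioms (OI) and (OII). -/
structure OSNorm (X : Type u) [AddCommGroup X] [Module ℂ X] where
  O : ∀ n : ℕ, Matrix (Fin n) (Fin n) X → ℝ
  nonneg : ∀ (n : ℕ) (x : Matrix (Fin n) (Fin n) X), 0 ≤ O n x
  eq_zero_iff : ∀ (n : ℕ) (x : Matrix (Fin n) (Fin n) X), O n x = 0 ↔ x = 0
  add_le : ∀ (n : ℕ) (x y : Matrix (Fin n) (Fin n) X), O n (x + y) ≤ O n x + O n y
  smul_eq : ∀ (n : ℕ) (c : ℂ) (x : Matrix (Fin n) (Fin n) X), O n (c • x) = ‖c‖ * O n x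
  cond_OI : ∀ (m n : ℕ) (x : Matrix (Fin m) (Fin m) X) (y : Matrix (Fin n) (Fin n) X),
    O (m + n) (blockDiag x y) = max (O m x) (O n y)
  cond_OII : ∀ (m n : ℕ) (α : Matrix (Fin n) (Fin m) ℂ) (x : Matrix (Fin m) (Fin m) X)
    (β : Matrix (Fin m) (Fin n) ℂ),
    O n (scalarMulRight (scalarMulLeft α x) β) ≤ matOpNorm α * O m x * matOpNorm β

/-- The completely bounded norm (valued in `[0, ∞]`) of a linear map, with respect to given
matrix norm sequences on the domain and the codomain. -/
def cbNorm {X Y : Type*} (WX : ∀ n : ℕ, Matrix (Fin n) (Fin n) X → ℝ)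
    (WY : ∀ n : ℕ, Matrix (Fin n) (Fin n) Y → ℝ) (φ : X → Y) : ℝ≥0∞ :=
  ⨆ (n : ℕ) (x : Matrix (Fin n) (Fin n) X) (_ : WX n x ≤ 1),
    ENNReal.ofReal (WY n (x.map φ))

/-- The maximal numerical radius norm affiliated with an operator space `(X, 𝒪_n)`. -/
def Wmax {X : Type u} [AddCommGroup X] [Module ℂ X] (OS : OSNorm X)
    (n : ℕ) (x : Matrix (Fin n) (Fin n) X) : ℝ :=
  sInf {t | ∃ (r : ℕ) (a : Matrix (Fin n) (Fin r) ℂ) (y : Matrix (Fin r) (Fin r) X)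
      (b : Matrix (Fin r) (Fin n) ℂ),
    x = scalarMulRight (scalarMulLeft a y) b ∧ OS.O r y = 1 ∧
      t = (1 / 2) * matOpNorm (a * aᴴ + bᴴ * b)}

/-- A complex Hilbert space together with a linear map of `X` into its bounded operators. -/
structure HilbertRep (X : Type u) [AddCommGroup X] [Module ℂ X] where
  H : Type u
  [instN : NormedAddCommGroup H]
  [instI : InnerProductSpace ℂ H]
  [instC : CompleteSpace H]
  Φ : X →ₗ[ℂ] (H →L[ℂ] H)

attribute [instance] HilbertRep.instN HilbertRep.instI HilbertRep.instC


noncomputable section AuxNROS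
set_option maxHeartbeats 1000000
set_option synthInstance.maxHeartbeats 200000

open Matrix Complex

/-! ### Concatenation of matrices and block identities -/

def hcat {k m r : ℕ} {Y : Type*} (β₁ : Matrix (Fin k) (Fin m) Y)
    (β₂ : Matrix (Fin k) (Fin r) Y) : Matrix (Fin k) (Fin (m + r)) Y :=
  Matrix.of fun i j => Sum.elim (β₁ i) (β₂ i) (finSumFinEquiv.symm j)

def vcat {k m r : ℕ} {Y : Type*} (γ₁ : Matrix (Fin m) (Fin k) Y)
    (γ₂ : Matrix (Fin r) (Fin k) Y) : Matrix (Fin (m + r)) (Fin k) Y :=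
  Matrix.of fun i j => Sum.elim (fun a => γ₁ a j) (fun b => γ₂ b j) (finSumFinEquiv.symm i)

lemma sum_fin_split {M : Type*} [AddCommMonoid M] {m r : ℕ} (g : Fin (m + r) → M) :
    ∑ l, g l = (∑ a : Fin m, g (finSumFinEquiv (Sum.inl a))) +
      ∑ b : Fin r, g (finSumFinEquiv (Sum.inr b)) := by
  rw [← finSumFinEquiv.sum_comp g]
  exact Fintype.sum_sum_type _

@[simp] lemma hcat_apply_inl {k m r : ℕ} {Y : Type*} (β₁ : Matrix (Fin k) (Fin m) Y)
    (β₂ : Matrix (Fin k) (Fin r) Y) (i : Fin k) (a : Fin m) :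
    hcat β₁ β₂ i (finSumFinEquiv (Sum.inl a)) = β₁ i a := by
  simp [hcat]

@[simp] lemma hcat_apply_inr {k m r : ℕ} {Y : Type*} (β₁ : Matrix (Fin k) (Fin m) Y)
    (β₂ : Matrix (Fin k) (Fin r) Y) (i : Fin k) (b : Fin r) :
    hcat β₁ β₂ i (finSumFinEquiv (Sum.inr b)) = β₂ i b := by
  simp [hcat]

@[simp] lemma vcat_apply_inl {k m r : ℕ} {Y : Type*} (γ₁ : Matrix (Fin m) (Fin k) Y)
    (γ₂ : Matrix (Fin r) (Fin k) Y) (a : Fin m) (j : Fin k) :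
    vcat γ₁ γ₂ (finSumFinEquiv (Sum.inl a)) j = γ₁ a j := by
  simp [vcat]

@[simp] lemma vcat_apply_inr {k m r : ℕ} {Y : Type*} (γ₁ : Matrix (Fin m) (Fin k) Y)
    (γ₂ : Matrix (Fin r) (Fin k) Y) (b : Fin r) (j : Fin k) :
    vcat γ₁ γ₂ (finSumFinEquiv (Sum.inr b)) j = γ₂ b j := by
  simp [vcat]

@[simp] lemma hcat_apply_castAdd {k m r : ℕ} {Y : Type*} (β₁ : Matrix (Fin k) (Fin m) Y)
    (β₂ : Matrix (Fin k) (Fin r) Y) (i : Fin k) (a : Fin m) :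
    hcat β₁ β₂ i (Fin.castAdd r a) = β₁ i a := by
  simp [hcat]

@[simp] lemma hcat_apply_natAdd {k m r : ℕ} {Y : Type*} (β₁ : Matrix (Fin k) (Fin m) Y)
    (β₂ : Matrix (Fin k) (Fin r) Y) (i : Fin k) (b : Fin r) :
    hcat β₁ β₂ i (Fin.natAdd m b) = β₂ i b := by
  simp [hcat]

@[simp] lemma vcat_apply_castAdd {k m r : ℕ} {Y : Type*} (γ₁ : Matrix (Fin m) (Fin k) Y)
    (γ₂ : Matrix (Fin r) (Fin k) Y) (a : Fin m) (j : Fin k) :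
    vcat γ₁ γ₂ (Fin.castAdd r a) j = γ₁ a j := by
  simp [vcat]

@[simp] lemma vcat_apply_natAdd {k m r : ℕ} {Y : Type*} (γ₁ : Matrix (Fin m) (Fin k) Y)
    (γ₂ : Matrix (Fin r) (Fin k) Y) (b : Fin r) (j : Fin k) :
    vcat γ₁ γ₂ (Fin.natAdd m b) j = γ₂ b j := by
  simp [vcat]

lemma hcat_mul_vcat {n k m r : ℕ} (β₁ : Matrix (Fin n) (Fin m) ℂ) (β₂ : Matrix (Fin n) (Fin r) ℂ)
    (γ₁ : Matrix (Fin m) (Fin k) ℂ) (γ₂ : Matrix (Fin r) (Fin k) ℂ) :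
    hcat β₁ β₂ * vcat γ₁ γ₂ = β₁ * γ₁ + β₂ * γ₂ := by
  ext i j
  simp only [Matrix.mul_apply, Matrix.add_apply]
  rw [sum_fin_split]
  simp

lemma conjTranspose_hcat {n m r : ℕ} (β₁ : Matrix (Fin n) (Fin m) ℂ)
    (β₂ : Matrix (Fin n) (Fin r) ℂ) : (hcat β₁ β₂)ᴴ = vcat β₁ᴴ β₂ᴴ := by
  ext i j
  simp only [Matrix.conjTranspose_apply, hcat, vcat, Matrix.of_apply]
  cases h : finSumFinEquiv.symm i <;> simp [h]

section scalarMulLemmas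

variable {X : Type u} [AddCommGroup X] [Module ℂ X]

lemma sML_smul {m n k : ℕ} (c : ℂ) (α : Matrix (Fin m) (Fin n) ℂ)
    (x : Matrix (Fin n) (Fin k) X) :
    scalarMulLeft (c • α) x = c • scalarMulLeft α x := by
  ext i j
  simp only [scalarMulLeft, Matrix.of_apply, Matrix.smul_apply, smul_eq_mul, Finset.smul_sum]
  exact Finset.sum_congr rfl fun l _ => by rw [mul_smul]

lemma sML_smul' {m n k : ℕ} (c : ℂ) (α : Matrix (Fin m) (Fin n) ℂ)
    (x : Matrix (Fin n) (Fin k) X) :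
    scalarMulLeft α (c • x) = c • scalarMulLeft α x := by
  ext i j
  simp only [scalarMulLeft, Matrix.of_apply, Matrix.smul_apply, Finset.smul_sum]
  exact Finset.sum_congr rfl fun l _ => by rw [smul_comm]

lemma sMR_smul {m n k : ℕ} (c : ℂ) (x : Matrix (Fin m) (Fin n) X)
    (β : Matrix (Fin n) (Fin k) ℂ) :
    scalarMulRight (c • x) β = c • scalarMulRight x β := by
  ext i j
  simp only [scalarMulRight, Matrix.of_apply, Matrix.smul_apply, Finset.smul_sum]
  exact Finset.sum_congr rfl fun l _ => by rw [smul_comm]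

lemma sMR_smul' {m n k : ℕ} (c : ℂ) (x : Matrix (Fin m) (Fin n) X)
    (β : Matrix (Fin n) (Fin k) ℂ) :
    scalarMulRight x (c • β) = c • scalarMulRight x β := by
  ext i j
  simp only [scalarMulRight, Matrix.of_apply, Matrix.smul_apply, smul_eq_mul, Finset.smul_sum]
  exact Finset.sum_congr rfl fun l _ => by rw [mul_smul]

lemma sML_zero {m n k : ℕ} (α : Matrix (Fin m) (Fin n) ℂ) :
    scalarMulLeft α (0 : Matrix (Fin n) (Fin k) X) = 0 := by
  ext i j
  simp [scalarMulLeft]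

lemma sMR_zero {m n k : ℕ} (β : Matrix (Fin n) (Fin k) ℂ) :
    scalarMulRight (0 : Matrix (Fin m) (Fin n) X) β = 0 := by
  ext i j
  simp [scalarMulRight]

lemma sMR_sML_block {n m r : ℕ} (β₁ : Matrix (Fin n) (Fin m) ℂ) (β₂ : Matrix (Fin n) (Fin r) ℂ)
    (A : Matrix (Fin m) (Fin m) X) (B : Matrix (Fin m) (Fin r) X)
    (C : Matrix (Fin r) (Fin m) X) (D : Matrix (Fin r) (Fin r) X)
    (γ₁ : Matrix (Fin m) (Fin n) ℂ) (γ₂ : Matrix (Fin r) (Fin n) ℂ) :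
    scalarMulRight (scalarMulLeft (hcat β₁ β₂)
        (Matrix.submatrix (Matrix.fromBlocks A B C D) finSumFinEquiv.symm finSumFinEquiv.symm))
      (vcat γ₁ γ₂) =
    scalarMulRight (scalarMulLeft β₁ A) γ₁ + scalarMulRight (scalarMulLeft β₁ B) γ₂ +
      scalarMulRight (scalarMulLeft β₂ C) γ₁ + scalarMulRight (scalarMulLeft β₂ D) γ₂ := by
  ext i j
  simp only [scalarMulRight, scalarMulLeft, Matrix.of_apply, Matrix.add_apply]
  rw [sum_fin_split]
  have h1 : ∀ a : Fin m,
      (∑ l', hcat β₁ β₂ i l' • (Matrix.submatrix (Matrix.fromBlocks A B C D)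
          finSumFinEquiv.symm finSumFinEquiv.symm) l' (finSumFinEquiv (Sum.inl a)))
        = (∑ a' : Fin m, β₁ i a' • A a' a) + ∑ b' : Fin r, β₂ i b' • C b' a := by
    intro a
    rw [sum_fin_split]
    simp
  have h2 : ∀ b : Fin r,
      (∑ l', hcat β₁ β₂ i l' • (Matrix.submatrix (Matrix.fromBlocks A B C D)
          finSumFinEquiv.symm finSumFinEquiv.symm) l' (finSumFinEquiv (Sum.inr b)))
        = (∑ a' : Fin m, β₁ i a' • B a' b) + ∑ b' : Fin r, β₂ i b' • D b' b := by
    intro b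
    rw [sum_fin_split]
    simp
  simp only [vcat_apply_inl, vcat_apply_inr, h1, h2, smul_add, Finset.sum_add_distrib]
  abel

end scalarMulLemmas

/-! ### The sublinear functional `qfun` -/

instance ballNE (n : ℕ) : Nonempty {ξ : EuclideanSpace ℂ (Fin n) // ‖ξ‖ ≤ 1} :=
  ⟨⟨0, by simp⟩⟩

def qfun (n : ℕ) (k : Matrix (Fin n) (Fin n) ℂ) : ℝ :=
  ⨆ ξ : {ξ : EuclideanSpace ℂ (Fin n) // ‖ξ‖ ≤ 1},
    (inner (𝕜 := ℂ) (ξ : EuclideanSpace ℂ (Fin n)) (Matrix.toEuclideanLin k ξ)).re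

lemma qfun_term_le (n : ℕ) (k : Matrix (Fin n) (Fin n) ℂ)
    (ξ : {ξ : EuclideanSpace ℂ (Fin n) // ‖ξ‖ ≤ 1}) :
    (inner (𝕜 := ℂ) (ξ : EuclideanSpace ℂ (Fin n)) (Matrix.toEuclideanLin k ξ)).re ≤
      ‖LinearMap.toContinuousLinearMap (Matrix.toEuclideanLin k)‖ := by
  obtain ⟨ξ, hξ⟩ := ξ
  have h1 : (inner (𝕜 := ℂ) ξ (Matrix.toEuclideanLin k ξ)).re ≤
      ‖ξ‖ * ‖Matrix.toEuclideanLin k ξ‖ := by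
    refine le_trans (Complex.re_le_norm _) ?_
    exact norm_inner_le_norm _ _
  have h2 : ‖Matrix.toEuclideanLin k ξ‖ ≤
      ‖LinearMap.toContinuousLinearMap (Matrix.toEuclideanLin k)‖ * ‖ξ‖ := by
    have h3 := (LinearMap.toContinuousLinearMap (Matrix.toEuclideanLin k)).le_opNorm ξ
    have h4 : LinearMap.toContinuousLinearMap (Matrix.toEuclideanLin k) ξ =
        Matrix.toEuclideanLin k ξ := rfl
    rw [h4] at h3
    exact h3
  nlinarith [norm_nonneg ξ, norm_nonneg (Matrix.toEuclideanLin k ξ),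
    norm_nonneg (LinearMap.toContinuousLinearMap (Matrix.toEuclideanLin k))]

lemma qfun_bdd (n : ℕ) (k : Matrix (Fin n) (Fin n) ℂ) :
    BddAbove (Set.range fun ξ : {ξ : EuclideanSpace ℂ (Fin n) // ‖ξ‖ ≤ 1} =>
      (inner (𝕜 := ℂ) (ξ : EuclideanSpace ℂ (Fin n)) (Matrix.toEuclideanLin k ξ)).re) :=
  ⟨_, by rintro x ⟨ξ, rfl⟩; exact qfun_term_le n k ξ⟩

lemma le_qfun (n : ℕ) (k : Matrix (Fin n) (Fin n) ℂ)
    (ξ : {ξ : EuclideanSpace ℂ (Fin n) // ‖ξ‖ ≤ 1}) :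
    (inner (𝕜 := ℂ) (ξ : EuclideanSpace ℂ (Fin n)) (Matrix.toEuclideanLin k ξ)).re ≤ qfun n k :=
  le_ciSup (qfun_bdd n k) ξ

lemma qfun_nonneg (n : ℕ) (k : Matrix (Fin n) (Fin n) ℂ) : 0 ≤ qfun n k := by
  have := le_qfun n k ⟨0, by simp⟩
  simpa using this

lemma qfun_zero (n : ℕ) : qfun n 0 = 0 := by
  refine le_antisymm (ciSup_le fun ξ => ?_) (qfun_nonneg n 0)
  have : Matrix.toEuclideanLin (0 : Matrix (Fin n) (Fin n) ℂ) = 0 := _root_.map_zero _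
  rw [this]
  simp

lemma qfun_add_le (n : ℕ) (u v : Matrix (Fin n) (Fin n) ℂ) :
    qfun n (u + v) ≤ qfun n u + qfun n v := by
  refine ciSup_le fun ξ => ?_
  have h : Matrix.toEuclideanLin (u + v) (ξ : EuclideanSpace ℂ (Fin n)) =
      Matrix.toEuclideanLin u ξ + Matrix.toEuclideanLin v ξ := by
    rw [_root_.map_add]; rfl
  rw [h, inner_add_right, Complex.add_re]
  exact add_le_add (le_qfun n u ξ) (le_qfun n v ξ)

lemma real_smul_mat {m r : ℕ} (c : ℝ) (M : Matrix (Fin m) (Fin r) ℂ) :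
    c • M = ((c : ℂ)) • M := by
  rw [← algebraMap_smul ℂ c M, Complex.coe_algebraMap]

lemma qfun_smul (n : ℕ) {c : ℝ} (hc : 0 ≤ c) (k : Matrix (Fin n) (Fin n) ℂ) :
    qfun n (c • k) = c * qfun n k := by
  unfold qfun
  rw [Real.mul_iSup_of_nonneg hc]
  refine iSup_congr fun ξ => ?_
  rw [real_smul_mat, _root_.map_smul]
  rw [LinearMap.smul_apply, inner_smul_right]
  rw [Complex.mul_re]
  simp

lemma qfun_one_le (n : ℕ) : qfun n 1 ≤ 1 := by
  refine ciSup_le fun ξ => ?_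
  have h1 : Matrix.toEuclideanLin (1 : Matrix (Fin n) (Fin n) ℂ)
      (ξ : EuclideanSpace ℂ (Fin n)) = (ξ : EuclideanSpace ℂ (Fin n)) := by
    rw [Matrix.toEuclideanLin_apply, Matrix.one_mulVec]
  have h2 : (inner (𝕜 := ℂ) (ξ : EuclideanSpace ℂ (Fin n)) (ξ : EuclideanSpace ℂ (Fin n))).re =
      ‖(ξ : EuclideanSpace ℂ (Fin n))‖ ^ 2 := by
    simpa using inner_self_eq_norm_sq (𝕜 := ℂ) (ξ : EuclideanSpace ℂ (Fin n))
  rw [h1, h2]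
  nlinarith [ξ.2, norm_nonneg (ξ : EuclideanSpace ℂ (Fin n))]

lemma inner_toEuclideanLin (n : ℕ) (k : Matrix (Fin n) (Fin n) ℂ)
    (ξ : EuclideanSpace ℂ (Fin n)) :
    (inner (𝕜 := ℂ) ξ (Matrix.toEuclideanLin k ξ)) =
      dotProduct (star (WithLp.equiv 2 (Fin n → ℂ) ξ))
        (k *ᵥ (WithLp.equiv 2 (Fin n → ℂ) ξ)) := by
  simp only [PiLp.inner_apply, RCLike.inner_apply, dotProduct, Pi.star_apply,
    Matrix.toEuclideanLin_apply, starRingEnd_apply]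
  exact Finset.sum_congr rfl fun _ _ => mul_comm _ _

lemma qfun_neg_psd (n : ℕ) {a : Matrix (Fin n) (Fin n) ℂ} (ha : a.PosSemidef) :
    qfun n (-a) ≤ 0 := by
  refine ciSup_le fun ξ => ?_
  have h1 : Matrix.toEuclideanLin (-a) (ξ : EuclideanSpace ℂ (Fin n)) =
      - Matrix.toEuclideanLin a (ξ : EuclideanSpace ℂ (Fin n)) := by
    rw [_root_.map_neg]; rfl
  rw [h1, inner_neg_right, Complex.neg_re, neg_nonpos]
  rw [inner_toEuclideanLin]
  have := ha.re_dotProduct_nonneg (WithLp.equiv 2 (Fin n → ℂ) (ξ : EuclideanSpace ℂ (Fin n)))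
  simpa using this

lemma qfun_psd_nonneg_term (n : ℕ) {a : Matrix (Fin n) (Fin n) ℂ} (ha : a.PosSemidef)
    (ξ : EuclideanSpace ℂ (Fin n)) :
    0 ≤ (inner (𝕜 := ℂ) ξ (Matrix.toEuclideanLin a ξ)).re := by
  rw [inner_toEuclideanLin]
  have := ha.re_dotProduct_nonneg (WithLp.equiv 2 (Fin n → ℂ) ξ)
  simpa using this

lemma qfun_skew (n : ℕ) {k : Matrix (Fin n) (Fin n) ℂ} (hk : kᴴ = -k) : qfun n k ≤ 0 := by
  refine ciSup_le fun ξ => ?_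
  rw [inner_toEuclideanLin]
  set v := WithLp.equiv 2 (Fin n → ℂ) (ξ : EuclideanSpace ℂ (Fin n)) with hv
  have h1 : star (dotProduct (star v) (k *ᵥ v)) =
      dotProduct (star v) (kᴴ *ᵥ v) := by
    rw [Matrix.star_dotProduct, star_star, Matrix.star_mulVec, ← Matrix.dotProduct_mulVec]
  rw [hk, Matrix.neg_mulVec, dotProduct_neg] at h1
  have h3 := congrArg Complex.re h1
  rw [show star (dotProduct (star v) (k *ᵥ v)) =
      (starRingEnd ℂ) (dotProduct (star v) (k *ᵥ v)) from rfl] at h3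
  rw [Complex.conj_re, Complex.neg_re] at h3
  linarith

/-! ### `matOpNorm` facts -/

lemma matOpNorm_conjTranspose {m n : ℕ} (β : Matrix (Fin m) (Fin n) ℂ) :
    matOpNorm βᴴ = matOpNorm β := by
  unfold matOpNorm
  rw [Matrix.toEuclideanLin_conjTranspose_eq_adjoint, LinearMap.adjoint_toContinuousLinearMap]
  exact (ContinuousLinearMap.adjoint :
    (EuclideanSpace ℂ (Fin n) →L[ℂ] EuclideanSpace ℂ (Fin m)) ≃ₗᵢ⋆[ℂ] _).norm_map _

lemma toEuclideanLin_mul_apply {n m r : ℕ} (M : Matrix (Fin n) (Fin m) ℂ)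
    (N : Matrix (Fin m) (Fin r) ℂ) (v : EuclideanSpace ℂ (Fin r)) :
    Matrix.toEuclideanLin (M * N) v = Matrix.toEuclideanLin M (Matrix.toEuclideanLin N v) := by
  rw [Matrix.toEuclideanLin_apply, Matrix.toEuclideanLin_apply, Matrix.toEuclideanLin_apply,
    WithLp.ofLp_toLp, Matrix.mulVec_mulVec]

lemma matOpNorm_sq_le_qfun {n R : ℕ} (β : Matrix (Fin n) (Fin R) ℂ) :
    matOpNorm β ^ 2 ≤ qfun n (β * βᴴ) := by
  have hterm : ∀ ξ : EuclideanSpace ℂ (Fin n),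
      (inner (𝕜 := ℂ) ξ (Matrix.toEuclideanLin (β * βᴴ) ξ)).re =
        ‖Matrix.toEuclideanLin βᴴ ξ‖ ^ 2 := by
    intro ξ
    rw [toEuclideanLin_mul_apply]
    have hadj : Matrix.toEuclideanLin β = LinearMap.adjoint (Matrix.toEuclideanLin βᴴ) := by
      rw [← Matrix.toEuclideanLin_conjTranspose_eq_adjoint, Matrix.conjTranspose_conjTranspose]
    rw [hadj, LinearMap.adjoint_inner_right]
    simpa using inner_self_eq_norm_sq (𝕜 := ℂ) (Matrix.toEuclideanLin βᴴ ξ)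
  have hq0 : 0 ≤ qfun n (β * βᴴ) := qfun_nonneg _ _
  have hb : ∀ v : EuclideanSpace ℂ (Fin n), ‖Matrix.toEuclideanLin βᴴ v‖ ≤
      Real.sqrt (qfun n (β * βᴴ)) * ‖v‖ := by
    intro v
    rcases eq_or_ne v 0 with rfl | hv
    · simp
    · have hnv : (0:ℝ) < ‖v‖ := norm_pos_iff.mpr hv
      set ξ : EuclideanSpace ℂ (Fin n) := ((‖v‖⁻¹ : ℝ) : ℂ) • v with hxi
      have hξ : ‖ξ‖ = 1 := by
        rw [hxi, norm_smul, Complex.norm_real, Real.norm_of_nonneg (inv_nonneg.mpr hnv.le),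
          inv_mul_cancel₀ (ne_of_gt hnv)]
      have h2 : ‖Matrix.toEuclideanLin βᴴ ξ‖ ^ 2 ≤ qfun n (β * βᴴ) := by
        rw [← hterm ξ]
        exact le_qfun n (β * βᴴ) ⟨ξ, hξ.le⟩
      have h3 : ‖Matrix.toEuclideanLin βᴴ ξ‖ ≤ Real.sqrt (qfun n (β * βᴴ)) := by
        rw [← Real.sqrt_sq (norm_nonneg (Matrix.toEuclideanLin βᴴ ξ))]
        exact Real.sqrt_le_sqrt h2
      have h4 : Matrix.toEuclideanLin βᴴ ξ = ((‖v‖⁻¹ : ℝ) : ℂ) • Matrix.toEuclideanLin βᴴ v := by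
        rw [hxi, _root_.map_smul]
      have h5 : ‖Matrix.toEuclideanLin βᴴ v‖ = ‖v‖ * ‖Matrix.toEuclideanLin βᴴ ξ‖ := by
        rw [h4, norm_smul, Complex.norm_real, Real.norm_of_nonneg (inv_nonneg.mpr hnv.le)]
        field_simp
      rw [h5, mul_comm]
      exact mul_le_mul_of_nonneg_right h3 (norm_nonneg v)
  have hbn : matOpNorm βᴴ ≤ Real.sqrt (qfun n (β * βᴴ)) := by
    unfold matOpNorm
    refine ContinuousLinearMap.opNorm_le_bound _ (Real.sqrt_nonneg _) fun v => ?_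
    have hco : (LinearMap.toContinuousLinearMap (Matrix.toEuclideanLin βᴴ)) v =
        Matrix.toEuclideanLin βᴴ v := rfl
    rw [hco]
    exact hb v
  rw [← matOpNorm_conjTranspose β]
  calc matOpNorm βᴴ ^ 2 ≤ Real.sqrt (qfun n (β * βᴴ)) ^ 2 := by
        have h0 : 0 ≤ matOpNorm βᴴ := norm_nonneg _
        nlinarith [hbn]
    _ = qfun n (β * βᴴ) := Real.sq_sqrt hq0

/-! ### The cone `Dset` and the sublinear functional `Nfun` -/

section Main

variable {X : Type u} [AddCommGroup X] [Module ℂ X]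

lemma W_zero (W : NRNorm X) (y : Matrix (Fin 0) (Fin 0) X) : W.W 0 y = 0 := by
  have hy : y = 0 := by ext i j; exact i.elim0
  rw [hy]
  exact (W.eq_zero_iff 0 0).mpr rfl

lemma norm_f_le (W : NRNorm X) {n : ℕ} (f : Matrix (Fin n) (Fin n) X →ₗ[ℂ] ℂ)
    (hf : ∀ x : Matrix (Fin n) (Fin n) X, W.W n x ≤ 1 → ‖f x‖ ≤ 1)
    (z : Matrix (Fin n) (Fin n) X) : ‖f z‖ ≤ W.W n z := by
  rcases eq_or_lt_of_le (W.nonneg n z) with h0 | hpos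
  · have hz : z = 0 := (W.eq_zero_iff n z).mp h0.symm
    rw [hz, _root_.map_zero]
    simpa using W.nonneg n 0
  · have h1 : W.W n ((((W.W n z)⁻¹ : ℝ) : ℂ) • z) ≤ 1 := by
      rw [W.smul_eq, Complex.norm_real, Real.norm_of_nonneg (inv_nonneg.mpr hpos.le),
        inv_mul_cancel₀ (ne_of_gt hpos)]
    have h2 := hf _ h1
    rw [_root_.map_smul, smul_eq_mul, norm_mul, Complex.norm_real,
      Real.norm_of_nonneg (inv_nonneg.mpr hpos.le)] at h2
    have h3 := mul_le_mul_of_nonneg_left h2 hpos.le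
    have h4 : W.W n z * ((W.W n z)⁻¹ * ‖f z‖) = ‖f z‖ := by
      field_simp
    rw [h4, mul_one] at h3
    exact h3

def Dset (W : NRNorm X) (n : ℕ) (f : Matrix (Fin n) (Fin n) X →ₗ[ℂ] ℂ) :
    Set (Matrix (Fin n) (Fin n) ℂ × ℝ) :=
  {p | ∃ (R : ℕ) (β : Matrix (Fin n) (Fin R) ℂ) (y : Matrix (Fin R) (Fin R) X),
    W.W R y ≤ 1 ∧ f (scalarMulRight (scalarMulLeft β y) βᴴ) = ((p.2 : ℝ) : ℂ) ∧ p.1 = β * βᴴ}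

lemma Dset_zero (W : NRNorm X) (n : ℕ) (f : Matrix (Fin n) (Fin n) X →ₗ[ℂ] ℂ) :
    ((0, 0) : Matrix (Fin n) (Fin n) ℂ × ℝ) ∈ Dset W n f := by
  refine ⟨0, 0, 0, ?_, ?_, ?_⟩
  · rw [W_zero]; norm_num
  · have h : scalarMulRight (scalarMulLeft (0 : Matrix (Fin n) (Fin 0) ℂ)
        (0 : Matrix (Fin 0) (Fin 0) X)) (0 : Matrix (Fin n) (Fin 0) ℂ)ᴴ = 0 := by
      ext i j; simp [scalarMulRight]
    rw [h, _root_.map_zero]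
    simp
  · ext i j
    simp [Matrix.mul_apply]

lemma Dset_add {W : NRNorm X} {n : ℕ} {f : Matrix (Fin n) (Fin n) X →ₗ[ℂ] ℂ}
    {h₁ h₂ : Matrix (Fin n) (Fin n) ℂ} {c₁ c₂ : ℝ}
    (H1 : (h₁, c₁) ∈ Dset W n f) (H2 : (h₂, c₂) ∈ Dset W n f) :
    (h₁ + h₂, c₁ + c₂) ∈ Dset W n f := by
  obtain ⟨R₁, β₁, y₁, hy₁, hf₁, hh₁⟩ := H1
  obtain ⟨R₂, β₂, y₂, hy₂, hf₂, hh₂⟩ := H2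
  dsimp only at hf₁ hh₁ hf₂ hh₂
  refine ⟨R₁ + R₂, hcat β₁ β₂, blockDiag y₁ y₂, ?_, ?_, ?_⟩
  all_goals try dsimp only
  · rw [W.cond_WI]
    exact max_le hy₁ hy₂
  · rw [conjTranspose_hcat]
    rw [show blockDiag y₁ y₂ = Matrix.submatrix (Matrix.fromBlocks y₁ 0 0 y₂)
      finSumFinEquiv.symm finSumFinEquiv.symm from rfl]
    rw [sMR_sML_block]
    rw [sML_zero, sML_zero, sMR_zero, sMR_zero]
    simp only [add_zero, zero_add]
    rw [_root_.map_add, hf₁, hf₂]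
    push_cast
    ring
  · rw [conjTranspose_hcat, hcat_mul_vcat, hh₁, hh₂]

lemma Dset_smul {W : NRNorm X} {n : ℕ} {f : Matrix (Fin n) (Fin n) X →ₗ[ℂ] ℂ}
    {h : Matrix (Fin n) (Fin n) ℂ} {d : ℝ} {c : ℝ} (hc : 0 ≤ c)
    (H : (h, d) ∈ Dset W n f) : (c • h, c * d) ∈ Dset W n f := by
  obtain ⟨R, β, y, hy, hfv, hh⟩ := H
  dsimp only at hfv hh
  have hss : ((Real.sqrt c : ℝ) : ℂ) * ((Real.sqrt c : ℝ) : ℂ) = ((c : ℝ) : ℂ) := by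
    rw [← Complex.ofReal_mul, Real.mul_self_sqrt hc]
  have hβH : (((Real.sqrt c : ℝ) : ℂ) • β)ᴴ = ((Real.sqrt c : ℝ) : ℂ) • βᴴ := by
    rw [Matrix.conjTranspose_smul]
    simp
  refine ⟨R, ((Real.sqrt c : ℝ) : ℂ) • β, y, hy, ?_, ?_⟩
  · dsimp only
    rw [hβH, sML_smul, sMR_smul, sMR_smul', _root_.map_smul, _root_.map_smul,
      smul_eq_mul, smul_eq_mul]
    have hcd : ((c * d : ℝ) : ℂ) = ((c : ℝ) : ℂ) * ((d : ℝ) : ℂ) := by push_cast; ring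
    linear_combination (((Real.sqrt c : ℝ) : ℂ) * ((Real.sqrt c : ℝ) : ℂ)) * hfv +
      ((d : ℝ) : ℂ) * hss - hcd
  · dsimp only
    rw [hβH, Matrix.smul_mul, Matrix.mul_smul, smul_smul, hss, hh]
    rw [real_smul_mat]

lemma Dset_single (W : NRNorm X) (n : ℕ) (f : Matrix (Fin n) (Fin n) X →ₗ[ℂ] ℂ)
    (r : ℕ) (α : Matrix (Fin n) (Fin r) ℂ) (x : Matrix (Fin r) (Fin r) X) :
    (((W.W r x : ℝ) : ℂ) • (α * αᴴ), ‖f (scalarMulRight (scalarMulLeft α x) αᴴ)‖)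
      ∈ Dset W n f := by
  classical
  set z := scalarMulRight (scalarMulLeft α x) αᴴ with hz
  rcases eq_or_lt_of_le (W.nonneg r x) with h0 | hw
  · have hx : x = 0 := (W.eq_zero_iff r x).mp h0.symm
    have hz0 : z = 0 := by
      rw [hz, hx, sML_zero, sMR_zero]
    refine ⟨0, 0, 0, ?_, ?_, ?_⟩
    · rw [W_zero]; norm_num
    · dsimp only
      have h : scalarMulRight (scalarMulLeft (0 : Matrix (Fin n) (Fin 0) ℂ)
          (0 : Matrix (Fin 0) (Fin 0) X)) (0 : Matrix (Fin n) (Fin 0) ℂ)ᴴ = 0 := by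
        ext i j; simp [scalarMulRight]
      rw [h, _root_.map_zero, hz0]
      simp
    · show ((W.W r x : ℝ) : ℂ) • (α * αᴴ) = _
      rw [← h0]
      ext i j
      simp [Matrix.mul_apply]
  · set w := W.W r x with hwdef
    set c := f z with hc
    set θ : ℂ := if c = 0 then 1 else ((‖c‖ : ℝ) : ℂ) / c with hθ
    have hθn : ‖θ‖ = 1 := by
      rw [hθ]
      split_ifs with hc0
      · simp
      · rw [norm_div, Complex.norm_real, norm_norm, div_self (norm_ne_zero_iff.mpr hc0)]
    have hw0 : ((w : ℝ) : ℂ) ≠ 0 := by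
      simp only [ne_eq, Complex.ofReal_eq_zero]
      exact ne_of_gt hw
    have hwinv : (((w⁻¹ : ℝ)) : ℂ) * ((w : ℝ) : ℂ) = 1 := by
      rw [← Complex.ofReal_mul, inv_mul_cancel₀ (ne_of_gt hw)]
      simp
    have hss : ((Real.sqrt w : ℝ) : ℂ) * ((Real.sqrt w : ℝ) : ℂ) = ((w : ℝ) : ℂ) := by
      rw [← Complex.ofReal_mul, Real.mul_self_sqrt hw.le]
    have hβH : (((Real.sqrt w : ℝ) : ℂ) • α)ᴴ = ((Real.sqrt w : ℝ) : ℂ) • αᴴ := by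
      rw [Matrix.conjTranspose_smul]
      simp
    have hθc : θ * c = ((‖c‖ : ℝ) : ℂ) := by
      rcases eq_or_ne c 0 with hc0 | hc0
      · rw [hc0, mul_zero]
        simp
      · rw [hθ, if_neg hc0, div_mul_cancel₀ _ hc0]
    refine ⟨r, ((Real.sqrt w : ℝ) : ℂ) • α, (θ * ((w⁻¹ : ℝ) : ℂ)) • x, ?_, ?_, ?_⟩
    · rw [W.smul_eq, norm_mul, hθn, one_mul, Complex.norm_real,
        Real.norm_of_nonneg (inv_nonneg.mpr hw.le), inv_mul_cancel₀ (ne_of_gt hw)]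
    · dsimp only
      rw [hβH, sML_smul, sML_smul', sMR_smul, sMR_smul', sMR_smul, _root_.map_smul,
        _root_.map_smul, _root_.map_smul, smul_eq_mul, smul_eq_mul, smul_eq_mul, ← hz, ← hc]
      linear_combination (θ * ((w⁻¹ : ℝ) : ℂ) * c) * hss + (θ * c) * hwinv + hθc
    · show ((w : ℝ) : ℂ) • (α * αᴴ) = _
      rw [hβH, Matrix.smul_mul, Matrix.mul_smul, smul_smul, hss]

lemma key_ineq (W : NRNorm X) {n : ℕ} (hn : 1 ≤ n) (f : Matrix (Fin n) (Fin n) X →ₗ[ℂ] ℂ)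
    (hf : ∀ x : Matrix (Fin n) (Fin n) X, W.W n x ≤ 1 → ‖f x‖ ≤ 1)
    {h : Matrix (Fin n) (Fin n) ℂ} {c : ℝ} (hmem : (h, c) ∈ Dset W n f)
    {t : ℝ} (ht : 0 ≤ t) :
    c + t ≤ qfun n (h + t • 1) := by
  obtain ⟨R, β, y, hy, hfv, hh⟩ := hmem
  dsimp only at hfv hh
  have hpsd : h.PosSemidef := by
    rw [hh]
    exact Matrix.posSemidef_self_mul_conjTranspose β
  have hcq : c ≤ qfun n h := by
    have h1 : c ≤ ‖f (scalarMulRight (scalarMulLeft β y) βᴴ)‖ := by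
      rw [hfv, Complex.norm_real, Real.norm_eq_abs]
      exact le_abs_self c
    have h2 := norm_f_le W f hf (scalarMulRight (scalarMulLeft β y) βᴴ)
    have h3 := W.cond_WII R n β y
    have h4 : matOpNorm β ^ 2 * W.W R y ≤ matOpNorm β ^ 2 := by
      nlinarith [sq_nonneg (matOpNorm β), W.nonneg R y]
    have h5 := matOpNorm_sq_le_qfun β
    rw [← hh] at h5
    linarith
  have hterm : ∀ ξ : EuclideanSpace ℂ (Fin n),
      (inner (𝕜 := ℂ) ξ (Matrix.toEuclideanLin
        (h + t • (1 : Matrix (Fin n) (Fin n) ℂ)) ξ)).re =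
      (inner (𝕜 := ℂ) ξ (Matrix.toEuclideanLin h ξ)).re + t * ‖ξ‖ ^ 2 := by
    intro ξ
    have h2 : Matrix.toEuclideanLin (h + t • (1 : Matrix (Fin n) (Fin n) ℂ)) ξ =
        Matrix.toEuclideanLin h ξ + ((t : ℝ) : ℂ) • ξ := by
      rw [_root_.map_add, real_smul_mat, _root_.map_smul]
      have h3 : Matrix.toEuclideanLin (1 : Matrix (Fin n) (Fin n) ℂ) ξ = ξ := by
        rw [Matrix.toEuclideanLin_apply, Matrix.one_mulVec]
      rw [LinearMap.add_apply, LinearMap.smul_apply, h3]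
    have h4 : (inner (𝕜 := ℂ) ξ ξ).re = ‖ξ‖ ^ 2 := by
      simpa using inner_self_eq_norm_sq (𝕜 := ℂ) ξ
    rw [h2, inner_add_right, Complex.add_re, inner_smul_right, Complex.mul_re,
      Complex.ofReal_re, Complex.ofReal_im, zero_mul, sub_zero, h4]
  refine le_of_forall_pos_le_add fun ε hε => ?_
  have hlt : c - ε < qfun n h := by linarith
  obtain ⟨⟨ξ, hξ1⟩, hξ2⟩ := exists_lt_of_lt_ciSup hlt
  rcases eq_or_ne ξ 0 with rfl | hξ0
  · have hc0 : c - ε < 0 := by simpa using hξ2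
    set e0 : EuclideanSpace ℂ (Fin n) := EuclideanSpace.single (⟨0, hn⟩ : Fin n) (1 : ℂ)
      with he0
    have he0n : ‖e0‖ = 1 := by
      rw [he0, EuclideanSpace.norm_single]
      simp
    have hq1 := le_qfun n (h + t • 1) ⟨e0, le_of_eq he0n⟩
    rw [hterm e0, he0n] at hq1
    have hpos := qfun_psd_nonneg_term n hpsd e0
    have : t ≤ qfun n (h + t • 1) := by nlinarith
    linarith
  · have hnp : (0:ℝ) < ‖ξ‖ := norm_pos_iff.mpr hξ0
    set ξ' : EuclideanSpace ℂ (Fin n) := ((‖ξ‖⁻¹ : ℝ) : ℂ) • ξ with hxi'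
    have hξ'1 : ‖ξ'‖ = 1 := by
      rw [hxi', norm_smul, Complex.norm_real, Real.norm_of_nonneg (inv_nonneg.mpr hnp.le),
        inv_mul_cancel₀ (ne_of_gt hnp)]
    have hterm' : (inner (𝕜 := ℂ) ξ' (Matrix.toEuclideanLin h ξ')).re =
        (‖ξ‖⁻¹) ^ 2 * (inner (𝕜 := ℂ) ξ (Matrix.toEuclideanLin h ξ)).re := by
      rw [hxi', _root_.map_smul, inner_smul_left, inner_smul_right]
      rw [Complex.conj_ofReal]
      rw [← mul_assoc, ← Complex.ofReal_mul]
      rw [Complex.mul_re, Complex.ofReal_re, Complex.ofReal_im]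
      ring
    have hinv1 : (1:ℝ) ≤ ‖ξ‖⁻¹ := by
      rw [le_inv_comm₀ one_pos hnp]
      simpa using hξ1
    have hposξ := qfun_psd_nonneg_term n hpsd ξ
    have hge : (inner (𝕜 := ℂ) ξ (Matrix.toEuclideanLin h ξ)).re ≤
        (inner (𝕜 := ℂ) ξ' (Matrix.toEuclideanLin h ξ')).re := by
      rw [hterm']
      have hsq : (1:ℝ) ≤ ‖ξ‖⁻¹ ^ 2 := by nlinarith
      nlinarith [mul_le_mul_of_nonneg_right hsq hposξ]
    have hq1 := le_qfun n (h + t • 1) ⟨ξ', le_of_eq hξ'1⟩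
    rw [hterm ξ', hξ'1] at hq1
    have hq2 : c - ε < (inner (𝕜 := ℂ) ξ (Matrix.toEuclideanLin h ξ)).re := hξ2
    nlinarith

def NSet (W : NRNorm X) (n : ℕ) (f : Matrix (Fin n) (Fin n) X →ₗ[ℂ] ℂ)
    (k : Matrix (Fin n) (Fin n) ℂ) : Set ℝ :=
  {b | ∃ h c t, (h, c) ∈ Dset W n f ∧ 0 ≤ t ∧ b = qfun n (k + h + t • 1) - c - t}

def Nfun (W : NRNorm X) (n : ℕ) (f : Matrix (Fin n) (Fin n) X →ₗ[ℂ] ℂ)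
    (k : Matrix (Fin n) (Fin n) ℂ) : ℝ :=
  sInf (NSet W n f k)

lemma NSet_nonempty (W : NRNorm X) (n : ℕ) (f : Matrix (Fin n) (Fin n) X →ₗ[ℂ] ℂ)
    (k : Matrix (Fin n) (Fin n) ℂ) : (NSet W n f k).Nonempty :=
  ⟨qfun n k, 0, 0, 0, Dset_zero W n f, le_refl 0, by simp⟩

lemma NSet_lb (W : NRNorm X) {n : ℕ} (hn : 1 ≤ n) (f : Matrix (Fin n) (Fin n) X →ₗ[ℂ] ℂ)
    (hf : ∀ x : Matrix (Fin n) (Fin n) X, W.W n x ≤ 1 → ‖f x‖ ≤ 1)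
    (k : Matrix (Fin n) (Fin n) ℂ) :
    ∀ b ∈ NSet W n f k, -(qfun n (-k)) ≤ b := by
  rintro b ⟨h, c, t, hD, ht, rfl⟩
  have h1 := key_ineq W hn f hf hD ht
  have h2 : qfun n (h + t • 1) ≤ qfun n (k + h + t • 1) + qfun n (-k) := by
    have h3 := qfun_add_le n (k + h + t • 1) (-k)
    have e : k + h + t • (1 : Matrix (Fin n) (Fin n) ℂ) + -k = h + t • 1 := by abel
    rw [e] at h3
    exact h3
  linarith

lemma Nfun_bddBelow (W : NRNorm X) {n : ℕ} (hn : 1 ≤ n)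
    (f : Matrix (Fin n) (Fin n) X →ₗ[ℂ] ℂ)
    (hf : ∀ x : Matrix (Fin n) (Fin n) X, W.W n x ≤ 1 → ‖f x‖ ≤ 1)
    (k : Matrix (Fin n) (Fin n) ℂ) : BddBelow (NSet W n f k) :=
  ⟨-(qfun n (-k)), fun b hb => NSet_lb W hn f hf k b hb⟩

lemma Nfun_le (W : NRNorm X) {n : ℕ} (hn : 1 ≤ n) (f : Matrix (Fin n) (Fin n) X →ₗ[ℂ] ℂ)
    (hf : ∀ x : Matrix (Fin n) (Fin n) X, W.W n x ≤ 1 → ‖f x‖ ≤ 1)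
    (k : Matrix (Fin n) (Fin n) ℂ) {h : Matrix (Fin n) (Fin n) ℂ} {c t : ℝ}
    (hD : (h, c) ∈ Dset W n f) (ht : 0 ≤ t) :
    Nfun W n f k ≤ qfun n (k + h + t • 1) - c - t :=
  csInf_le (Nfun_bddBelow W hn f hf k) ⟨h, c, t, hD, ht, rfl⟩

lemma Nfun_le_q (W : NRNorm X) {n : ℕ} (hn : 1 ≤ n) (f : Matrix (Fin n) (Fin n) X →ₗ[ℂ] ℂ)
    (hf : ∀ x : Matrix (Fin n) (Fin n) X, W.W n x ≤ 1 → ‖f x‖ ≤ 1)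
    (k : Matrix (Fin n) (Fin n) ℂ) : Nfun W n f k ≤ qfun n k := by
  have h1 := Nfun_le W hn f hf k (Dset_zero W n f) (le_refl 0)
  simpa using h1

lemma Nfun_add (W : NRNorm X) {n : ℕ} (hn : 1 ≤ n) (f : Matrix (Fin n) (Fin n) X →ₗ[ℂ] ℂ)
    (hf : ∀ x : Matrix (Fin n) (Fin n) X, W.W n x ≤ 1 → ‖f x‖ ≤ 1)
    (k₁ k₂ : Matrix (Fin n) (Fin n) ℂ) :
    Nfun W n f (k₁ + k₂) ≤ Nfun W n f k₁ + Nfun W n f k₂ := by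
  have H : ∀ b₁ ∈ NSet W n f k₁, ∀ b₂ ∈ NSet W n f k₂, Nfun W n f (k₁ + k₂) ≤ b₁ + b₂ := by
    rintro b₁ ⟨h₁, c₁, t₁, hD₁, ht₁, rfl⟩ b₂ ⟨h₂, c₂, t₂, hD₂, ht₂, rfl⟩
    have hD := Dset_add hD₁ hD₂
    have h1 := Nfun_le W hn f hf (k₁ + k₂) hD (add_nonneg ht₁ ht₂)
    have h2 : qfun n (k₁ + k₂ + (h₁ + h₂) + (t₁ + t₂) • 1) ≤
        qfun n (k₁ + h₁ + t₁ • 1) + qfun n (k₂ + h₂ + t₂ • 1) := by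
      have h3 := qfun_add_le n (k₁ + h₁ + t₁ • 1) (k₂ + h₂ + t₂ • 1)
      have e : k₁ + h₁ + t₁ • (1 : Matrix (Fin n) (Fin n) ℂ) + (k₂ + h₂ + t₂ • 1) =
          k₁ + k₂ + (h₁ + h₂) + (t₁ + t₂) • 1 := by
        rw [add_smul]
        abel
      rw [e] at h3
      exact h3
    linarith
  have h1 : ∀ b₁ ∈ NSet W n f k₁, Nfun W n f (k₁ + k₂) - b₁ ≤ Nfun W n f k₂ := by
    intro b₁ hb₁
    refine le_csInf (NSet_nonempty W n f k₂) fun b₂ hb₂ => ?_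
    linarith [H b₁ hb₁ b₂ hb₂]
  have h2 : Nfun W n f (k₁ + k₂) - Nfun W n f k₂ ≤ Nfun W n f k₁ := by
    refine le_csInf (NSet_nonempty W n f k₁) fun b₁ hb₁ => ?_
    linarith [h1 b₁ hb₁]
  linarith

lemma Nfun_smul_le (W : NRNorm X) {n : ℕ} (hn : 1 ≤ n)
    (f : Matrix (Fin n) (Fin n) X →ₗ[ℂ] ℂ)
    (hf : ∀ x : Matrix (Fin n) (Fin n) X, W.W n x ≤ 1 → ‖f x‖ ≤ 1)
    {c : ℝ} (hc : 0 < c) (k : Matrix (Fin n) (Fin n) ℂ) :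
    Nfun W n f (c • k) ≤ c * Nfun W n f k := by
  have H : ∀ b ∈ NSet W n f k, Nfun W n f (c • k) ≤ c * b := by
    rintro b ⟨h, d, t, hD, ht, rfl⟩
    have hD' := Dset_smul hc.le hD
    have h1 := Nfun_le W hn f hf (c • k) hD' (mul_nonneg hc.le ht)
    have e : c • k + c • h + (c * t) • (1 : Matrix (Fin n) (Fin n) ℂ) =
        c • (k + h + t • 1) := by
      rw [smul_add, smul_add, smul_smul]
    rw [e, qfun_smul n hc.le] at h1
    linarith [h1]
  have h2 : Nfun W n f (c • k) / c ≤ Nfun W n f k := by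
    refine le_csInf (NSet_nonempty W n f k) fun b hb => ?_
    rw [div_le_iff₀ hc, mul_comm]
    exact H b hb
  rw [div_le_iff₀ hc] at h2
  linarith [h2]

lemma Nfun_smul (W : NRNorm X) {n : ℕ} (hn : 1 ≤ n) (f : Matrix (Fin n) (Fin n) X →ₗ[ℂ] ℂ)
    (hf : ∀ x : Matrix (Fin n) (Fin n) X, W.W n x ≤ 1 → ‖f x‖ ≤ 1)
    {c : ℝ} (hc : 0 < c) (k : Matrix (Fin n) (Fin n) ℂ) :
    Nfun W n f (c • k) = c * Nfun W n f k := by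
  refine le_antisymm (Nfun_smul_le W hn f hf hc k) ?_
  have h1 := Nfun_smul_le W hn f hf (inv_pos.mpr hc) (c • k)
  rw [smul_smul, inv_mul_cancel₀ (ne_of_gt hc), one_smul] at h1
  have h2 : c * Nfun W n f k ≤ c * (c⁻¹ * Nfun W n f (c • k)) :=
    mul_le_mul_of_nonneg_left h1 hc.le
  rw [← mul_assoc, mul_inv_cancel₀ (ne_of_gt hc), one_mul] at h2
  exact h2

lemma Nfun_zero_nonneg (W : NRNorm X) {n : ℕ} (hn : 1 ≤ n)
    (f : Matrix (Fin n) (Fin n) X →ₗ[ℂ] ℂ)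
    (hf : ∀ x : Matrix (Fin n) (Fin n) X, W.W n x ≤ 1 → ‖f x‖ ≤ 1) :
    0 ≤ Nfun W n f 0 := by
  refine le_csInf (NSet_nonempty W n f 0) ?_
  rintro b ⟨h, c, t, hD, ht, rfl⟩
  have h1 := key_ineq W hn f hf hD ht
  rw [zero_add]
  linarith

lemma exists_phi (W : NRNorm X) (n : ℕ) (hn : 1 ≤ n)
    (f : Matrix (Fin n) (Fin n) X →ₗ[ℂ] ℂ)
    (hf : ∀ x : Matrix (Fin n) (Fin n) X, W.W n x ≤ 1 → ‖f x‖ ≤ 1) :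
    ∃ φ : Matrix (Fin n) (Fin n) ℂ →ₗ[ℝ] ℝ,
      (∀ k, φ k ≤ qfun n k) ∧ (∀ h c, (h, c) ∈ Dset W n f → c ≤ φ h) ∧ φ 1 = 1 := by
  obtain ⟨φ, -, hφ⟩ := exists_extension_of_le_sublinear
    (⟨⊥, 0⟩ : Matrix (Fin n) (Fin n) ℂ →ₗ.[ℝ] ℝ) (Nfun W n f)
    (fun c hc k => Nfun_smul W hn f hf hc k)
    (fun k₁ k₂ => Nfun_add W hn f hf k₁ k₂)
    (fun x => by
      have hx : (x : Matrix (Fin n) (Fin n) ℂ) = 0 := (Submodule.mem_bot ℝ).mp x.2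
      have h0 : (⟨⊥, 0⟩ : Matrix (Fin n) (Fin n) ℂ →ₗ.[ℝ] ℝ) x = 0 := rfl
      rw [h0, hx]
      exact Nfun_zero_nonneg W hn f hf)
  have hq : ∀ k, φ k ≤ qfun n k := fun k => (hφ k).trans (Nfun_le_q W hn f hf k)
  refine ⟨φ, hq, ?_, ?_⟩
  · intro h c hD
    have h1 := (hφ (-h)).trans (Nfun_le W hn f hf (-h) hD (le_refl 0))
    have e : -h + h + (0:ℝ) • (1 : Matrix (Fin n) (Fin n) ℂ) = 0 := by simp
    rw [e, qfun_zero, _root_.map_neg] at h1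
    linarith
  · have h1 : φ 1 ≤ 1 := (hq 1).trans (qfun_one_le n)
    have h2 := (hφ (-1)).trans (Nfun_le W hn f hf (-1) (Dset_zero W n f) zero_le_one)
    have e : (-1 : Matrix (Fin n) (Fin n) ℂ) + 0 + (1:ℝ) • 1 = 0 := by simp
    rw [e, qfun_zero, _root_.map_neg] at h2
    linarith

end Main

/-! ### The elementary optimization lemma -/

lemma opt_lemma {F A B Wc : ℝ} (hF : 0 ≤ F) (hA : 0 ≤ A) (hB : 0 ≤ B) (hW : 0 ≤ Wc)
    (h : ∀ s t : ℝ, 0 < s → 0 < t → s * t * F ≤ (s ^ 2 * A + t ^ 2 * B) * Wc) :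
    F ≤ 2 * Real.sqrt A * Real.sqrt B * Wc := by
  have hRHS : 0 ≤ 2 * Real.sqrt A * Real.sqrt B * Wc := by positivity
  rcases eq_or_lt_of_le hA with hA0 | hApos
  · have hF0 : F ≤ 0 := by
      by_contra hFpos
      push_neg at hFpos
      set s := (B * Wc + 1) / F with hs
      have hspos : 0 < s := by positivity
      have h1 := h s 1 hspos one_pos
      rw [← hA0] at h1
      have hsF : s * F = B * Wc + 1 := div_mul_cancel₀ _ (ne_of_gt hFpos)
      nlinarith
    linarith
  rcases eq_or_lt_of_le hB with hB0 | hBpos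
  · have hF0 : F ≤ 0 := by
      by_contra hFpos
      push_neg at hFpos
      set t := (A * Wc + 1) / F with hts
      have htpos : 0 < t := by positivity
      have h1 := h 1 t one_pos htpos
      rw [← hB0] at h1
      have htF : t * F = A * Wc + 1 := div_mul_cancel₀ _ (ne_of_gt hFpos)
      nlinarith
    linarith
  · have hsA : 0 < Real.sqrt A := Real.sqrt_pos.mpr hApos
    have hsB : 0 < Real.sqrt B := Real.sqrt_pos.mpr hBpos
    set s := Real.sqrt (Real.sqrt B / Real.sqrt A) with hsdef
    set t := Real.sqrt (Real.sqrt A / Real.sqrt B) with htdef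
    have hs : 0 < s := Real.sqrt_pos.mpr (by positivity)
    have ht : 0 < t := Real.sqrt_pos.mpr (by positivity)
    have hst : s * t = 1 := by
      rw [hsdef, htdef, ← Real.sqrt_mul (by positivity)]
      rw [show Real.sqrt B / Real.sqrt A * (Real.sqrt A / Real.sqrt B) = 1 by
        field_simp]
      exact Real.sqrt_one
    have hs2 : s ^ 2 = Real.sqrt B / Real.sqrt A := Real.sq_sqrt (by positivity)
    have ht2 : t ^ 2 = Real.sqrt A / Real.sqrt B := Real.sq_sqrt (by positivity)
    have h2 := h s t hs ht
    rw [hst, one_mul] at h2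
    have hkey : s ^ 2 * A + t ^ 2 * B = 2 * Real.sqrt A * Real.sqrt B := by
      rw [hs2, ht2]
      have hA' : A = Real.sqrt A * Real.sqrt A := (Real.mul_self_sqrt hA).symm
      have hB' : B = Real.sqrt B * Real.sqrt B := (Real.mul_self_sqrt hB).symm
      field_simp
      nlinarith [hA', hB']
    rw [hkey] at h2
    linarith [h2]

end AuxNROS


end
/-- Lemma 2.2: if `f` is a functional on `M_n(X)` with `𝒲*(f) ≤ 1`, then there is a
state `p₀` on `M_n(ℂ)` with `|f(α x α*)| ≤ p₀(α α*) 𝒲_r(x)` and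
`|f(α x β)| ≤ 2 p₀(α α*)^{1/2} p₀(β* β)^{1/2} 𝒲_{2r}([[0,x],[0,0]])`. -/
theorem stmt_1 {X : Type u} [AddCommGroup X] [Module ℂ X] (W : NRNorm X)
    (n : ℕ) (hn : 1 ≤ n) (f : Matrix (Fin n) (Fin n) X →ₗ[ℂ] ℂ)
    (hf : ∀ x : Matrix (Fin n) (Fin n) X, W.W n x ≤ 1 → ‖f x‖ ≤ 1) :
    ∃ p₀ : Matrix (Fin n) (Fin n) ℂ →ₗ[ℂ] ℂ,
      (∀ a : Matrix (Fin n) (Fin n) ℂ, a.PosSemidef → 0 ≤ p₀ a) ∧ p₀ 1 = 1 ∧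
      (∀ (r : ℕ) (α : Matrix (Fin n) (Fin r) ℂ) (x : Matrix (Fin r) (Fin r) X),
        ‖f (scalarMulRight (scalarMulLeft α x) αᴴ)‖ ≤ (p₀ (α * αᴴ)).re * W.W r x) ∧
      (∀ (r : ℕ) (α : Matrix (Fin n) (Fin r) ℂ) (x : Matrix (Fin r) (Fin r) X)
        (β : Matrix (Fin r) (Fin n) ℂ),
        ‖f (scalarMulRight (scalarMulLeft α x) β)‖ ≤
          2 * Real.sqrt ((p₀ (α * αᴴ)).re) * Real.sqrt ((p₀ (βᴴ * β)).re) *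
            W.W (r + r) (cornerBlock x)) := by
  classical
  obtain ⟨φ, hq, hφD, hφ1⟩ := exists_phi W n hn f hf
  have hskewφ : ∀ k : Matrix (Fin n) (Fin n) ℂ, kᴴ = -k → φ k = 0 := by
    intro k hk
    have h1 : φ k ≤ 0 := (hq k).trans (qfun_skew n hk)
    have h2 : φ (-k) ≤ 0 := (hq (-k)).trans (qfun_skew n (by
      rw [Matrix.conjTranspose_neg, hk, neg_neg]))
    rw [_root_.map_neg] at h2
    linarith
  have hφpsd : ∀ a : Matrix (Fin n) (Fin n) ℂ, a.PosSemidef → 0 ≤ φ a := by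
    intro a ha
    have h1 := (hq (-a)).trans (qfun_neg_psd n ha)
    rw [_root_.map_neg] at h1
    linarith
  set p₀ : Matrix (Fin n) (Fin n) ℂ →ₗ[ℂ] ℂ := LinearMap.extendTo𝕜' φ with hp₀
  have hherm : ∀ k : Matrix (Fin n) (Fin n) ℂ, kᴴ = k → p₀ k = ((φ k : ℝ) : ℂ) := by
    intro k hk
    rw [hp₀, show (LinearMap.extendTo𝕜' φ : Matrix (Fin n) (Fin n) ℂ →ₗ[ℂ] ℂ) =
      Module.Dual.extendRCLike φ from rfl, Module.Dual.extendRCLike_apply]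
    have h1 : φ ((RCLike.I : ℂ) • k) = 0 := by
      apply hskewφ
      rw [Matrix.conjTranspose_smul, hk]
      simp [Complex.star_def, Complex.conj_I, RCLike.I_to_complex]
    rw [h1]
    simp
  -- abstract form of conclusion 3
  have h3 : ∀ (r : ℕ) (α : Matrix (Fin n) (Fin r) ℂ) (x : Matrix (Fin r) (Fin r) X),
      ‖f (scalarMulRight (scalarMulLeft α x) αᴴ)‖ ≤ φ (α * αᴴ) * W.W r x := by
    intro r α x
    have hD := Dset_single W n f r α x
    have h1 := hφD _ _ hD
    have h2 : φ (((W.W r x : ℝ) : ℂ) • (α * αᴴ)) = W.W r x * φ (α * αᴴ) := by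
      rw [← real_smul_mat, _root_.map_smul, smul_eq_mul]
    rw [h2] at h1
    linarith [h1, mul_comm (W.W r x) (φ (α * αᴴ))]
  have hre1 : ∀ (r : ℕ) (α : Matrix (Fin n) (Fin r) ℂ),
      (p₀ (α * αᴴ)).re = φ (α * αᴴ) := by
    intro r α
    rw [hherm _ (Matrix.isHermitian_mul_conjTranspose_self α), Complex.ofReal_re]
  have hre2 : ∀ (r : ℕ) (β : Matrix (Fin r) (Fin n) ℂ),
      (p₀ (βᴴ * β)).re = φ (βᴴ * β) := by
    intro r β
    rw [hherm _ (Matrix.isHermitian_conjTranspose_mul_self β), Complex.ofReal_re]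
  refine ⟨p₀, ?_, ?_, ?_, ?_⟩
  · intro a ha
    rw [hherm a ha.isHermitian]
    exact Complex.zero_le_real.mpr (hφpsd a ha)
  · rw [hherm 1 (by simp), hφ1]
    simp
  · intro r α x
    rw [hre1 r α]
    exact h3 r α x
  · intro r α x β
    set F := ‖f (scalarMulRight (scalarMulLeft α x) β)‖ with hF
    have hA : 0 ≤ φ (α * αᴴ) := hφpsd _ (Matrix.posSemidef_self_mul_conjTranspose α)
    have hB : 0 ≤ φ (βᴴ * β) := hφpsd _ (Matrix.posSemidef_conjTranspose_mul_self β)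
    have hWc : 0 ≤ W.W (r + r) (cornerBlock x) := W.nonneg _ _
    have hmain : ∀ s t : ℝ, 0 < s → 0 < t →
        s * t * F ≤ (s ^ 2 * φ (α * αᴴ) + t ^ 2 * φ (βᴴ * β)) *
          W.W (r + r) (cornerBlock x) := by
      intro s t hs ht
      have h1 := h3 (r + r) (hcat ((s : ℂ) • α) ((t : ℂ) • βᴴ)) (cornerBlock x)
      have hγ : (hcat ((s : ℂ) • α) ((t : ℂ) • βᴴ))ᴴ =
          vcat ((s : ℂ) • αᴴ) ((t : ℂ) • β) := by
        rw [conjTranspose_hcat, Matrix.conjTranspose_smul, Matrix.conjTranspose_smul,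
          Matrix.conjTranspose_conjTranspose]
        simp [Complex.star_def, Complex.conj_ofReal]
      have e1 : scalarMulRight (scalarMulLeft (hcat ((s : ℂ) • α) ((t : ℂ) • βᴴ))
            (cornerBlock x)) (hcat ((s : ℂ) • α) ((t : ℂ) • βᴴ))ᴴ =
          ((s : ℂ) * (t : ℂ)) • scalarMulRight (scalarMulLeft α x) β := by
        rw [hγ]
        rw [show cornerBlock x = Matrix.submatrix
          (Matrix.fromBlocks 0 x 0 0) finSumFinEquiv.symm finSumFinEquiv.symm from rfl]
        rw [sMR_sML_block]
        rw [sML_zero, sML_zero, sMR_zero, sMR_zero, add_zero, add_zero, zero_add]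
        rw [sML_smul, sMR_smul, sMR_smul', smul_smul]
      have e2 : hcat ((s : ℂ) • α) ((t : ℂ) • βᴴ) *
            (hcat ((s : ℂ) • α) ((t : ℂ) • βᴴ))ᴴ =
          (s ^ 2 : ℝ) • (α * αᴴ) + (t ^ 2 : ℝ) • (βᴴ * β) := by
        have hs2 : ((s : ℂ) * (s : ℂ)) = ((s ^ 2 : ℝ) : ℂ) := by push_cast; ring
        have ht2 : ((t : ℂ) * (t : ℂ)) = ((t ^ 2 : ℝ) : ℂ) := by push_cast; ring
        rw [hγ, hcat_mul_vcat, Matrix.smul_mul, Matrix.smul_mul, Matrix.mul_smul,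
          Matrix.mul_smul, smul_smul, smul_smul, hs2, ht2,
          real_smul_mat (s ^ 2), real_smul_mat (t ^ 2)]
      have hval : ‖f (scalarMulRight (scalarMulLeft (hcat ((s : ℂ) • α) ((t : ℂ) • βᴴ))
            (cornerBlock x)) (hcat ((s : ℂ) • α) ((t : ℂ) • βᴴ))ᴴ)‖ = s * t * F := by
        rw [e1, _root_.map_smul, smul_eq_mul, norm_mul, norm_mul, Complex.norm_real,
          Complex.norm_real, Real.norm_of_nonneg hs.le, Real.norm_of_nonneg ht.le, hF]
      have hφval : φ (hcat ((s : ℂ) • α) ((t : ℂ) • βᴴ) *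
            (hcat ((s : ℂ) • α) ((t : ℂ) • βᴴ))ᴴ) =
          s ^ 2 * φ (α * αᴴ) + t ^ 2 * φ (βᴴ * β) := by
        rw [e2, _root_.map_add, _root_.map_smul, _root_.map_smul, smul_eq_mul, smul_eq_mul]
      rw [hval, hφval] at h1
      exact h1
    have hopt := opt_lemma (by rw [hF]; exact norm_nonneg _) hA hB hWc hmain
    rw [hre1 r α, hre2 r β]
    exact hopt
end

section
/- Let (X, 𝒲_n) be a numerical radius operator space and let N be a subspace of X that is closed with respect to 𝒲_1. Identify M_n(X/N) with M_n(X)/M_n(N) and give it the quotient norm 𝒲̃_n([x]) = inf{𝒲_n(x + z) : z ∈ M_n(N)}. Then the norms 𝒲̃_n satisfy conditions (WI) and (WII), so X/N is a numerical radius operator space. -/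
open scoped ComplexOrder Matrix ENNReal TensorProduct

universe u v

noncomputable section

/-! ### Auxiliary lemmas for stmt_7 -/

lemma matOpNorm_nonneg {m n : ℕ} (α : Matrix (Fin m) (Fin n) ℂ) : 0 ≤ matOpNorm α :=
  norm_nonneg _

lemma matOpNorm_embed_le {m n : ℕ} (e : Fin m → Fin n) (he : Function.Injective e) :
    matOpNorm (Matrix.of fun i l => if l = e i then (1:ℂ) else 0) ≤ 1 := by
  apply ContinuousLinearMap.opNorm_le_bound _ zero_le_one
  intro v
  rw [LinearMap.coe_toContinuousLinearMap', Matrix.toEuclideanLin_apply, one_mul]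
  rw [EuclideanSpace.norm_eq, EuclideanSpace.norm_eq]
  apply Real.sqrt_le_sqrt
  have hmv : ∀ i : Fin m, ((Matrix.of fun i l => if l = e i then (1:ℂ) else 0) *ᵥ
      (WithLp.equiv 2 (Fin n → ℂ)) v) i = v (e i) := by
    intro i
    simp [Matrix.mulVec, dotProduct, ite_mul, Finset.sum_ite_eq']
  calc ∑ i : Fin m, ‖((WithLp.equiv 2 (Fin m → ℂ)).symm ((Matrix.of fun i l => if l = e i then (1:ℂ) else 0) *ᵥ (WithLp.equiv 2 (Fin n → ℂ)) v)) i‖^2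
      = ∑ i : Fin m, ‖v (e i)‖^2 := by
        apply Finset.sum_congr rfl; intro i _; exact congrArg (fun t : ℂ => ‖t‖^2) (hmv i)
    _ ≤ ∑ l : Fin n, ‖v l‖^2 := by
        rw [show (∑ i : Fin m, ‖v (e i)‖^2) = ∑ l ∈ Finset.univ.image e, ‖v l‖^2 from
          (Finset.sum_image (f := fun l => ‖v l‖^2) (g := e) (fun a _ b _ h => he h)).symm]
        exact Finset.sum_le_sum_of_subset_of_nonneg (Finset.subset_univ _)
          (fun _ _ _ => by positivity)

lemma matOpNorm_row_le {n : ℕ} (c : Fin n → ℂ) :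
    matOpNorm (Matrix.of fun (_ : Fin 1) l => c l) ≤ ∑ l, ‖c l‖ := by
  apply ContinuousLinearMap.opNorm_le_bound _ (Finset.sum_nonneg fun _ _ => norm_nonneg _)
  intro v
  rw [LinearMap.coe_toContinuousLinearMap', Matrix.toEuclideanLin_apply]
  rw [EuclideanSpace.norm_eq]
  have h1 : ∀ l : Fin n, ‖v l‖ ≤ ‖v‖ := by
    intro l
    rw [EuclideanSpace.norm_eq]
    rw [show ‖v l‖ = Real.sqrt (‖v l‖^2) from (Real.sqrt_sq (norm_nonneg _)).symm]
    apply Real.sqrt_le_sqrt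
    exact Finset.single_le_sum (f := fun l => ‖v l‖^2) (fun _ _ => by positivity)
      (Finset.mem_univ l)
  have h2 : ∑ i : Fin 1, ‖(WithLp.toLp 2 ((Matrix.of fun (_ : Fin 1) l => c l) *ᵥ v.ofLp)).ofLp i‖^2
      = ‖∑ l, c l * v l‖^2 := by
    rw [Fin.sum_univ_one]
    simp [Matrix.mulVec, dotProduct]
  rw [h2, Real.sqrt_sq (norm_nonneg _)]
  calc ‖∑ l, c l * v l‖ ≤ ∑ l, ‖c l * v l‖ := norm_sum_le _ _
    _ = ∑ l, ‖c l‖ * ‖v l‖ := by simp [norm_mul]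
    _ ≤ ∑ l, ‖c l‖ * ‖v‖ := Finset.sum_le_sum fun l _ =>
        mul_le_mul_of_nonneg_left (h1 l) (norm_nonneg _)
    _ = (∑ l, ‖c l‖) * ‖v‖ := by rw [Finset.sum_mul]

section quotAux

variable {X : Type u} {Y : Type v} [AddCommGroup X] [Module ℂ X]
  [AddCommGroup Y] [Module ℂ Y]

lemma map_scalarLR (f : X →ₗ[ℂ] Y) {m n : ℕ}
    (α : Matrix (Fin n) (Fin m) ℂ) (x : Matrix (Fin m) (Fin m) X)
    (β : Matrix (Fin m) (Fin n) ℂ) :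
    (scalarMulRight (scalarMulLeft α x) β).map f
      = scalarMulRight (scalarMulLeft α (x.map f)) β := by
  ext i j
  simp [scalarMulRight, scalarMulLeft, Matrix.map_apply, map_sum, map_smul]

lemma map_blockDiag (f : X →ₗ[ℂ] Y) {m n : ℕ} (x : Matrix (Fin m) (Fin m) X)
    (y : Matrix (Fin n) (Fin n) X) :
    (blockDiag x y).map f = blockDiag (x.map f) (y.map f) := by
  ext i j
  simp only [blockDiag, Matrix.map_apply, Matrix.submatrix_apply]
  rcases finSumFinEquiv.symm i with a | a <;> rcases finSumFinEquiv.symm j with b | b <;>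
    simp [Matrix.fromBlocks, Matrix.map_apply]

lemma compress_eq {m n : ℕ} (e : Fin m → Fin n) (z : Matrix (Fin n) (Fin n) X) :
    scalarMulRight (scalarMulLeft (Matrix.of fun i l => if l = e i then (1:ℂ) else 0) z)
      (Matrix.of fun i l => if l = e i then (1:ℂ) else 0)ᴴ
      = Matrix.of fun i i' => z (e i) (e i') := by
  ext i i'
  simp only [scalarMulRight, scalarMulLeft, Matrix.of_apply, Matrix.conjTranspose_apply]
  simp [apply_ite (starRingEnd ℂ), ite_smul, Finset.sum_ite_eq']


lemma extract_le (W : NRNorm X) {n : ℕ} (x : Matrix (Fin n) (Fin n) X) (i j : Fin n) :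
    W.W 1 (Matrix.of fun _ _ => x i j) ≤ 16 * W.W n x := by
  classical
  set c : ℂ → Fin n → ℂ :=
    fun v l => (if l = i then 1 else 0) + v * (if l = j then 1 else 0) with hc
  set A : ℂ → Matrix (Fin 1) (Fin n) ℂ := fun v => Matrix.of fun _ l => c v l with hA
  set comp : ℂ → Matrix (Fin 1) (Fin 1) X :=
    fun v => scalarMulRight (scalarMulLeft (A v) x) (A v)ᴴ with hcomp
  have comp_entry : ∀ (v : ℂ) (a b : Fin 1), comp v a b
      = ∑ l, ∑ l', (c v l * (starRingEnd ℂ) (c v l')) • x l l' := by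
    intro v a b
    simp only [hcomp, hA, scalarMulRight, scalarMulLeft, Matrix.of_apply,
      Matrix.conjTranspose_apply]
    rw [Finset.sum_comm]
    apply Finset.sum_congr rfl
    intro l _
    rw [Finset.smul_sum]
    apply Finset.sum_congr rfl
    intro l' _
    rw [smul_smul, mul_comm]
    rfl
  -- the averaging identity
  have key : (1:ℂ) • comp 1 + Complex.I • comp Complex.I + (-1:ℂ) • comp (-1)
      + (-Complex.I) • comp (-Complex.I) = (4:ℂ) • Matrix.of (fun _ _ => x i j) := by
    ext a b
    simp only [Matrix.add_apply, Matrix.smul_apply, comp_entry, Matrix.of_apply]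
    have hr : (4:ℂ) • x i j
        = ∑ l, ∑ l', (if l = i then (if l' = j then (4:ℂ) else 0) else 0) • x l l' := by
      rw [Finset.sum_eq_single i]
      · rw [Finset.sum_eq_single j]
        · simp
        · intro b _ hb; simp [hb]
        · intro h; exact absurd (Finset.mem_univ j) h
      · intro b _ hb; simp [hb]
      · intro h; exact absurd (Finset.mem_univ i) h
    rw [hr]
    simp only [Finset.smul_sum, ← Finset.sum_add_distrib, smul_smul]
    apply Finset.sum_congr rfl
    intro l _
    apply Finset.sum_congr rfl
    intro l' _
    have hcoef : (1:ℂ) * (c 1 l * (starRingEnd ℂ) (c 1 l'))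
        + Complex.I * (c Complex.I l * (starRingEnd ℂ) (c Complex.I l'))
        + (-1) * (c (-1) l * (starRingEnd ℂ) (c (-1) l'))
        + (-Complex.I) * (c (-Complex.I) l * (starRingEnd ℂ) (c (-Complex.I) l'))
        = (if l = i then (if l' = j then (4:ℂ) else 0) else 0) := by
      have h4 : (if l = i then (if l' = j then (4:ℂ) else 0) else 0)
          = 4 * ((if l = i then (1:ℂ) else 0) * (if l' = j then (1:ℂ) else 0)) := by
        by_cases h1 : l = i <;> by_cases h2 : l' = j <;> simp [h1, h2]
      rw [h4]
      simp only [hc, map_add, map_mul, map_one, map_neg, Complex.conj_I,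
        apply_ite (starRingEnd ℂ), map_zero]
      set e := (if l = i then (1:ℂ) else 0) with he
      set f := (if l = j then (1:ℂ) else 0) with hf
      set g := (if l' = i then (1:ℂ) else 0) with hg
      set h := (if l' = j then (1:ℂ) else 0) with hh
      linear_combination (2*f*g - 2*e*h) * Complex.I_sq
    rw [← hcoef, add_smul, add_smul, add_smul]
  -- norm bound for the scalar matrices
  have hAn : ∀ v : ℂ, ‖v‖ = 1 → matOpNorm (A v) ≤ 2 := by
    intro v hv
    refine (matOpNorm_row_le (c v)).trans ?_
    calc ∑ l, ‖c v l‖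
        ≤ ∑ l, (‖(if l = i then (1:ℂ) else 0)‖ + ‖v * (if l = j then (1:ℂ) else 0)‖) :=
          Finset.sum_le_sum fun l _ => norm_add_le _ _
      _ = (∑ l, ‖(if l = i then (1:ℂ) else 0)‖) + ∑ l, ‖v‖ * ‖(if l = j then (1:ℂ) else 0)‖ := by
          rw [← Finset.sum_add_distrib]
          exact Finset.sum_congr rfl fun l _ => by rw [norm_mul]
      _ = 2 := by
          simp [apply_ite (‖·‖ : ℂ → ℝ), Finset.sum_ite_eq', hv]
          norm_num
  have hcompW : ∀ v : ℂ, ‖v‖ = 1 → W.W 1 (comp v) ≤ 4 * W.W n x := by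
    intro v hv
    refine (W.cond_WII n 1 (A v) x).trans ?_
    have h2 : matOpNorm (A v) ^ 2 ≤ 4 := by
      have := hAn v hv
      nlinarith [matOpNorm_nonneg (A v)]
    exact mul_le_mul_of_nonneg_right h2 (W.nonneg n x) |>.trans (by norm_num)
  have hWx := W.nonneg n x
  have hnorm : ∀ v : ℂ, ‖v‖ = 1 → W.W 1 (v • comp v) ≤ 4 * W.W n x := by
    intro v hv
    rw [W.smul_eq, hv, one_mul]
    exact hcompW v hv
  have hfinal : W.W 1 ((4:ℂ) • Matrix.of (fun _ _ : Fin 1 => x i j)) ≤ 16 * W.W n x := by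
    rw [← key]
    have e1 := hnorm 1 (by simp)
    have e2 := hnorm Complex.I (by simp)
    have e3 := hnorm (-1) (by simp)
    have e4 := hnorm (-Complex.I) (by simp)
    have t1 := W.add_le 1 ((1:ℂ) • comp 1 + Complex.I • comp Complex.I + (-1:ℂ) • comp (-1))
      ((-Complex.I) • comp (-Complex.I))
    have t2 := W.add_le 1 ((1:ℂ) • comp 1 + Complex.I • comp Complex.I) ((-1:ℂ) • comp (-1))
    have t3 := W.add_le 1 ((1:ℂ) • comp 1) (Complex.I • comp Complex.I)
    linarith
  rw [W.smul_eq] at hfinal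
  have : ‖(4:ℂ)‖ = 4 := by norm_num
  rw [this] at hfinal
  linarith

variable (W : NRNorm X) (N : Submodule ℂ X)

/-- The quotient norm. -/
def QW (n : ℕ) (q : Matrix (Fin n) (Fin n) (X ⧸ N)) : ℝ :=
  sInf {t | ∃ x : Matrix (Fin n) (Fin n) X,
    x.map ⇑(Submodule.mkQ N) = q ∧ t = W.W n x}

lemma rep_exists {n : ℕ} (q : Matrix (Fin n) (Fin n) (X ⧸ N)) :
    ∃ x : Matrix (Fin n) (Fin n) X, x.map ⇑(Submodule.mkQ N) = q := by
  choose f hf using fun i j => Submodule.Quotient.mk_surjective N (q i j)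
  exact ⟨Matrix.of f, by ext i j; simpa [Matrix.map_apply] using hf i j⟩

lemma QW_bddBelow {n : ℕ} (q : Matrix (Fin n) (Fin n) (X ⧸ N)) :
    BddBelow {t | ∃ x : Matrix (Fin n) (Fin n) X,
      x.map ⇑(Submodule.mkQ N) = q ∧ t = W.W n x} := by
  refine ⟨0, fun t ht => ?_⟩
  obtain ⟨x, -, rfl⟩ := ht
  exact W.nonneg n x

lemma QW_le {n : ℕ} {q : Matrix (Fin n) (Fin n) (X ⧸ N)}
    {x : Matrix (Fin n) (Fin n) X} (hx : x.map ⇑(Submodule.mkQ N) = q) :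
    QW W N n q ≤ W.W n x :=
  csInf_le (QW_bddBelow W N q) ⟨x, hx, rfl⟩

lemma QW_nonneg {n : ℕ} (q : Matrix (Fin n) (Fin n) (X ⧸ N)) : 0 ≤ QW W N n q :=
  Real.sInf_nonneg (fun t ht => by obtain ⟨x, -, rfl⟩ := ht; exact W.nonneg n x)

lemma le_QW {n : ℕ} {q : Matrix (Fin n) (Fin n) (X ⧸ N)} {c : ℝ}
    (h : ∀ x : Matrix (Fin n) (Fin n) X, x.map ⇑(Submodule.mkQ N) = q → c ≤ W.W n x) :
    c ≤ QW W N n q := by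
  obtain ⟨x₀, hx₀⟩ := rep_exists N q
  exact le_csInf ⟨W.W n x₀, x₀, hx₀, rfl⟩ (fun t ht => by obtain ⟨x, hx, rfl⟩ := ht; exact h x hx)

lemma exists_rep_lt {n : ℕ} {q : Matrix (Fin n) (Fin n) (X ⧸ N)} {t : ℝ}
    (h : QW W N n q < t) :
    ∃ x : Matrix (Fin n) (Fin n) X, x.map ⇑(Submodule.mkQ N) = q ∧ W.W n x < t := by
  obtain ⟨x₀, hx₀⟩ := rep_exists N q
  have hne : Set.Nonempty {t | ∃ x : Matrix (Fin n) (Fin n) X,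
      x.map ⇑(Submodule.mkQ N) = q ∧ t = W.W n x} := ⟨W.W n x₀, x₀, hx₀, rfl⟩
  obtain ⟨s, hs, hst⟩ := exists_lt_of_csInf_lt hne h
  obtain ⟨x, hx, rfl⟩ := hs
  exact ⟨x, hx, hst⟩

lemma QW_le_mul {n' n : ℕ} (q' : Matrix (Fin n') (Fin n') (X ⧸ N))
    (q : Matrix (Fin n) (Fin n) (X ⧸ N)) (C : ℝ) (hC : 0 ≤ C)
    (h : ∀ x : Matrix (Fin n) (Fin n) X, x.map ⇑(Submodule.mkQ N) = q →
      QW W N n' q' ≤ C * W.W n x) :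
    QW W N n' q' ≤ C * QW W N n q := by
  rcases hC.eq_or_lt with h0 | h0
  · obtain ⟨x, hx⟩ := rep_exists N q
    have := h x hx
    rw [← h0] at this ⊢
    simpa using this
  · rw [mul_comm, ← div_le_iff₀ h0]
    apply le_QW
    intro x hx
    rw [div_le_iff₀ h0, mul_comm]
    exact h x hx

lemma QW_zero (n : ℕ) : QW W N n (0 : Matrix (Fin n) (Fin n) (X ⧸ N)) = 0 := by
  refine le_antisymm ?_ (QW_nonneg W N 0)
  have h0 : (0 : Matrix (Fin n) (Fin n) X).map ⇑(Submodule.mkQ N) = 0 := by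
    ext i j; simp [Matrix.map_apply]
  have h1 := QW_le W N h0
  rwa [(W.eq_zero_iff n 0).mpr rfl] at h1

end quotAux
end
/-- if `N` is a 𝒲₁-closed subspace of a numerical radius operator space `X`, then
the quotient norms on `M_n(X/N) = M_n(X)/M_n(N)` satisfy (WI) and (WII), so `X/N` is a
numerical radius operator space. -/
theorem stmt_7 {X : Type u} [AddCommGroup X] [Module ℂ X] (W : NRNorm X)
    (N : Submodule ℂ X)
    (hclosed : ∀ v : X, (∀ ε : ℝ, 0 < ε → ∃ u ∈ N,
        W.W 1 (Matrix.of fun _ _ => v - u) < ε) → v ∈ N) :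
    ∃ WQ : NRNorm (X ⧸ N),
      ∀ (n : ℕ) (q : Matrix (Fin n) (Fin n) (X ⧸ N)),
        WQ.W n q = sInf {t | ∃ x : Matrix (Fin n) (Fin n) X,
          x.map ⇑(Submodule.mkQ N) = q ∧ t = W.W n x} := by
  
  classical
  refine ⟨⟨QW W N, fun n q => QW_nonneg W N q, ?_, ?_, ?_, ?_, ?_⟩, fun n q => rfl⟩
  · -- eq_zero_iff
    intro n q
    constructor
    · intro h
      ext i j
      rw [Matrix.zero_apply]
      obtain ⟨x₀, hx₀⟩ := rep_exists N q
      have hq : q i j = Submodule.mkQ N (x₀ i j) := by rw [← hx₀]; rfl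
      rw [hq, Submodule.mkQ_apply, Submodule.Quotient.mk_eq_zero]
      apply hclosed
      intro ε hε
      have h16 : QW W N n q < ε / 16 := by rw [h]; positivity
      obtain ⟨x, hx, hxW⟩ := exists_rep_lt W N h16
      refine ⟨x₀ i j - x i j, ?_, ?_⟩
      · rw [← Submodule.Quotient.mk_eq_zero, ← Submodule.mkQ_apply, map_sub]
        have h1 : Submodule.mkQ N (x₀ i j) = q i j := by rw [← hx₀]; rfl
        have h2 : Submodule.mkQ N (x i j) = q i j := by rw [← hx]; rfl
        rw [h1, h2, sub_self]
      · have heq : x₀ i j - (x₀ i j - x i j) = x i j := by abel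
        rw [heq]
        calc W.W 1 (Matrix.of fun _ _ => x i j) ≤ 16 * W.W n x := extract_le W x i j
          _ < 16 * (ε / 16) := by linarith
          _ = ε := by ring
    · rintro rfl
      exact QW_zero W N n
  · -- add_le
    intro n q1 q2
    refine le_of_forall_pos_le_add ?_
    intro ε hε
    obtain ⟨x, hx, hxW⟩ := exists_rep_lt W N
      (show QW W N n q1 < QW W N n q1 + ε / 2 by linarith)
    obtain ⟨y, hy, hyW⟩ := exists_rep_lt W N
      (show QW W N n q2 < QW W N n q2 + ε / 2 by linarith)
    have hxy : (x + y).map ⇑(Submodule.mkQ N) = q1 + q2 := by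
      ext i j
      simp only [Matrix.map_apply, Matrix.add_apply, map_add]
      rw [← hx, ← hy]; rfl
    have hle := (QW_le W N hxy).trans (W.add_le n x y)
    linarith
  · -- smul_eq
    intro n cc q
    have hsm : ∀ (d : ℂ) (p : Matrix (Fin n) (Fin n) (X ⧸ N)),
        QW W N n (d • p) ≤ ‖d‖ * QW W N n p := by
      intro d p
      refine QW_le_mul W N _ _ _ (norm_nonneg d) ?_
      intro x hx
      have hdx : (d • x).map ⇑(Submodule.mkQ N) = d • p := by
        ext i j
        simp only [Matrix.map_apply, Matrix.smul_apply, map_smul]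
        rw [← hx]; rfl
      exact (QW_le W N hdx).trans_eq (W.smul_eq n d x)
    rcases eq_or_ne cc 0 with rfl | hc
    · simp only [norm_zero, zero_mul, zero_smul]
      exact QW_zero W N n
    · refine le_antisymm (hsm cc q) ?_
      have h2 := hsm cc⁻¹ (cc • q)
      rw [smul_smul, inv_mul_cancel₀ hc, one_smul] at h2
      have h3 : ‖cc‖ * QW W N n q ≤ ‖cc‖ * (‖cc⁻¹‖ * QW W N n (cc • q)) :=
        mul_le_mul_of_nonneg_left h2 (norm_nonneg cc)
      rw [← mul_assoc, ← norm_mul, mul_inv_cancel₀ hc] at h3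
      simpa using h3
  · -- cond_WI
    intro m n p q
    apply le_antisymm
    · refine le_of_forall_pos_le_add ?_
      intro ε hε
      obtain ⟨x, hx, hxW⟩ := exists_rep_lt W N
        (show QW W N m p < QW W N m p + ε by linarith)
      obtain ⟨y, hy, hyW⟩ := exists_rep_lt W N
        (show QW W N n q < QW W N n q + ε by linarith)
      have hbd : (blockDiag x y).map ⇑(Submodule.mkQ N) = blockDiag p q := by
        rw [map_blockDiag (Submodule.mkQ N), hx, hy]
      have hle := QW_le W N hbd
      rw [W.cond_WI m n x y] at hle
      have hle2 : QW W N (m + n) (blockDiag p q) ≤ max (QW W N m p + ε) (QW W N n q + ε) :=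
        hle.trans (max_le_max hxW.le hyW.le)
      rwa [max_add_add_right] at hle2
    · have compside : ∀ (k : ℕ) (e : Fin k → Fin (m + n)) (he : Function.Injective e)
          (r : Matrix (Fin k) (Fin k) (X ⧸ N))
          (hbd : ∀ a b : Fin k, (blockDiag p q) (e a) (e b) = r a b),
          QW W N k r ≤ QW W N (m + n) (blockDiag p q) := by
        intro k e he r hbd
        apply le_QW
        intro z hz
        have hcz := compress_eq e z
        have hrep : (scalarMulRight
            (scalarMulLeft (Matrix.of fun i l => if l = e i then (1:ℂ) else 0) z)
            (Matrix.of fun i l => if l = e i then (1:ℂ) else 0)ᴴ).map ⇑(Submodule.mkQ N)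
            = r := by
          rw [hcz]
          ext a b
          simp only [Matrix.map_apply, Matrix.of_apply]
          have hzz : (Submodule.mkQ N) (z (e a) (e b)) = (blockDiag p q) (e a) (e b) := by
            rw [← hz]; rfl
          rw [hzz, hbd]
        have h1 := QW_le W N hrep
        have h2 := W.cond_WII (m + n) k (Matrix.of fun i l => if l = e i then (1:ℂ) else 0) z
        have h3 := matOpNorm_embed_le e he
        have h4 := matOpNorm_nonneg (Matrix.of fun i l => if l = e i then (1:ℂ) else 0)
        have h5 := W.nonneg (m + n) z
        have h6 : matOpNorm (Matrix.of fun i l => if l = e i then (1:ℂ) else 0) ^ 2 ≤ 1 := by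
          nlinarith
        have h7 := mul_le_mul_of_nonneg_right h6 h5
        rw [one_mul] at h7
        linarith
      apply max_le
      · refine compside m (fun i => finSumFinEquiv (Sum.inl i))
          (fun a b h => Sum.inl_injective (finSumFinEquiv.injective h)) p ?_
        intro a b
        simp [blockDiag, Matrix.submatrix_apply, Equiv.symm_apply_apply]
      · refine compside n (fun i => finSumFinEquiv (Sum.inr i))
          (fun a b h => Sum.inr_injective (finSumFinEquiv.injective h)) q ?_
        intro a b
        simp [blockDiag, Matrix.submatrix_apply, Equiv.symm_apply_apply]
  · -- cond_WII
    intro m n α q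
    refine QW_le_mul W N _ _ _ (sq_nonneg (matOpNorm α)) ?_
    intro x hx
    have hrep : (scalarMulRight (scalarMulLeft α x) αᴴ).map ⇑(Submodule.mkQ N)
        = scalarMulRight (scalarMulLeft α q) αᴴ := by
      rw [map_scalarLR (Submodule.mkQ N), hx]
    exact (QW_le W N hrep).trans (W.cond_WII m n α x)
end
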